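/- Let (Ω, 𝒜, μ) be a probability space, (ℱ_t)_{t∈ℝ} a filtration of sub-σ-algebras of 𝒜, 0 < δ < T real numbers, and n a positive integer. Let a, x : ℝ × Ω → ℝⁿ be jointly measurable processes such that x is adapted (x(t,·) is strongly ℱ_t-measurable for every t), x(t,·) = 0 μ-a.s. for every t ∈ [−δ, 0), a(t,·) = 0 μ-a.s. for every t ∈ (T, T+δ], and ∫₀^{T+δ} E[|a(t)|²] dt < ∞, ∫_{−δ}^{T} E[|x(t)|²] dt < ∞. Then ∫₀^T E[⟨a(t), x(t−δ)⟩] dt = ∫₀^T E[⟨E[a(t+δ) | ℱ_t], x(t)⟩] dt. -/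

import Mathlib

open MeasureTheory
open scoped RealInnerProductSpace ENNReal

section Aux

variable {Ω : Type*} {m : MeasurableSpace Ω} [m0 : MeasurableSpace Ω] {μ : Measure Ω}
  [IsProbabilityMeasure μ] {n : ℕ}

/-- The coordinates of the conditional expectation are the conditional expectations of
the coordinates. -/
lemma condexp_coord_aux (hm : m ≤ m0) (f : Ω → EuclideanSpace ℝ (Fin n))
    (hf : Integrable f μ) (i : Fin n) :
    (fun ω => (μ[f|m]) ω i) =ᵐ[μ] μ[fun ω => f ω i|m] := by
  have hfi : Integrable (fun ω => f ω i) μ := by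
    simpa using (EuclideanSpace.proj (𝕜 := ℝ) i).integrable_comp hf
  refine ae_eq_condExp_of_forall_setIntegral_eq hm hfi ?_ ?_ ?_
  · intro s _ _
    have : Integrable (fun ω => (EuclideanSpace.proj (𝕜 := ℝ) i) ((μ[f|m]) ω)) μ :=
      (EuclideanSpace.proj (𝕜 := ℝ) i).integrable_comp (integrable_condExp (m := m))
    exact this.integrableOn
  · intro s hs hμs
    have h1 : ∫ ω in s, (EuclideanSpace.proj (𝕜 := ℝ) i) ((μ[f|m]) ω) ∂μ
        = (EuclideanSpace.proj (𝕜 := ℝ) i) (∫ ω in s, (μ[f|m]) ω ∂μ) :=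
      ContinuousLinearMap.integral_comp_comm _ ((integrable_condExp (m := m)).integrableOn)
    have h2 : ∫ ω in s, (EuclideanSpace.proj (𝕜 := ℝ) i) (f ω) ∂μ
        = (EuclideanSpace.proj (𝕜 := ℝ) i) (∫ ω in s, f ω ∂μ) :=
      ContinuousLinearMap.integral_comp_comm _ hf.integrableOn
    have h3 : ∫ ω in s, (μ[f|m]) ω ∂μ = ∫ ω in s, f ω ∂μ := setIntegral_condExp hm hf hs
    have h1' : ∫ ω in s, (μ[f|m]) ω i ∂μ = (∫ ω in s, (μ[f|m]) ω ∂μ) i := by simpa using h1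
    have h2' : ∫ ω in s, f ω i ∂μ = (∫ ω in s, f ω ∂μ) i := by simpa using h2
    rw [h1', h2', h3]
  · exact StronglyMeasurable.aestronglyMeasurable ((EuclideanSpace.proj (𝕜 := ℝ) i).continuous.comp_stronglyMeasurable
      (stronglyMeasurable_condExp (m := m)))

/-- Duality property of conditional expectation in `L²`: one can replace a process by its
conditional expectation when paired against an `m`-measurable `L²` function. -/
lemma integral_inner_condexp_aux (hm : m ≤ m0) {f g : Ω → EuclideanSpace ℝ (Fin n)}
    (hf : MemLp f 2 μ) (hg : MemLp g 2 μ) (hgm : StronglyMeasurable[m] g) :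
    ∫ ω, ⟪f ω, g ω⟫ ∂μ = ∫ ω, ⟪(μ[f|m]) ω, g ω⟫ ∂μ := by
  have hfi : Integrable f μ := hf.integrable one_le_two
  have hfc : ∀ i : Fin n, MemLp (fun ω => f ω i) 2 μ := fun i => by
    simpa [Function.comp_def] using (EuclideanSpace.proj (𝕜 := ℝ) i).comp_memLp' hf
  have hgc : ∀ i : Fin n, MemLp (fun ω => g ω i) 2 μ := fun i => by
    simpa [Function.comp_def] using (EuclideanSpace.proj (𝕜 := ℝ) i).comp_memLp' hg
  have hgmc : ∀ i : Fin n, StronglyMeasurable[m] (fun ω => g ω i) := fun i =>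
    (EuclideanSpace.proj (𝕜 := ℝ) i).continuous.comp_stronglyMeasurable hgm
  have hpqr : (1 : ℝ≥0∞) / 1 = 1 / 2 + 1 / 2 := by
    rw [ENNReal.add_halves, one_div_one]
  have hmulint : ∀ i : Fin n, Integrable ((fun ω => g ω i) * fun ω => f ω i) μ := fun i => by
    have := ((hfc i).smul (hgc i) : MemLp ((fun ω => g ω i) • fun ω => f ω i) 1 μ)
    simpa [smul_eq_mul] using this.integrable le_rfl
  have hmulae : ∀ i : Fin n,
      μ[(fun ω => g ω i) * fun ω => f ω i|m] =ᵐ[μ] (fun ω => g ω i) * μ[fun ω => f ω i|m] :=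
    fun i => condExp_mul_of_stronglyMeasurable_left (hgmc i) (hmulint i)
      ((hfc i).integrable one_le_two)
  have hinner : ∀ u v : EuclideanSpace ℝ (Fin n), ⟪u, v⟫ = ∑ i, u i * v i := fun u v => by
    simp [PiLp.inner_apply, RCLike.inner_apply, mul_comm]
  have hint1 : ∀ i : Fin n, Integrable (fun ω => f ω i * g ω i) μ := fun i =>
    (hmulint i).congr (Filter.Eventually.of_forall fun ω => by simp [mul_comm])
  have hint2 : ∀ i : Fin n, Integrable (fun ω => (μ[f|m]) ω i * g ω i) μ := fun i => by
    have e1 : Integrable ((fun ω => g ω i) * μ[fun ω => f ω i|m]) μ :=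
      (integrable_condExp (m := m)).congr (hmulae i)
    refine e1.congr ?_
    filter_upwards [condexp_coord_aux hm f hfi i] with ω hω
    simp only [Pi.mul_apply]
    rw [← hω]; ring
  calc ∫ ω, ⟪f ω, g ω⟫ ∂μ = ∑ i, ∫ ω, f ω i * g ω i ∂μ := by
        simp_rw [hinner]; exact integral_finset_sum _ (fun i _ => hint1 i)
    _ = ∑ i, ∫ ω, (μ[f|m]) ω i * g ω i ∂μ := by
        refine Finset.sum_congr rfl fun i _ => ?_
        have c1 : ∫ ω, f ω i * g ω i ∂μ
            = ∫ ω, ((fun ω => g ω i) * fun ω => f ω i) ω ∂μ := by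
          simp [mul_comm]
        have c2 : ∫ ω, (μ[(fun ω => g ω i) * fun ω => f ω i|m]) ω ∂μ
            = ∫ ω, ((fun ω => g ω i) * fun ω => f ω i) ω ∂μ := integral_condExp hm
        have c3 : ∫ ω, (μ[(fun ω => g ω i) * fun ω => f ω i|m]) ω ∂μ
            = ∫ ω, g ω i * (μ[fun ω => f ω i|m]) ω ∂μ :=
          integral_congr_ae ((hmulae i).mono fun ω h => by simpa using h)
        have c4 : ∫ ω, g ω i * (μ[fun ω => f ω i|m]) ω ∂μ
            = ∫ ω, (μ[f|m]) ω i * g ω i ∂μ := by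
          refine integral_congr_ae ?_
          filter_upwards [condexp_coord_aux hm f hfi i] with ω hω
          rw [← hω]; ring
        rw [c1, ← c2, c3, c4]
    _ = ∫ ω, ⟪(μ[f|m]) ω, g ω⟫ ∂μ := by
        simp_rw [hinner]; exact (integral_finset_sum _ (fun i _ => hint2 i)).symm

lemma memℒp_two_of_lintegral_aux {E : Type*} [NormedAddCommGroup E] {f : Ω → E}
    (hmeas : AEStronglyMeasurable f μ)
    (h : ∫⁻ ω, (‖f ω‖₊ : ℝ≥0∞) ^ 2 ∂μ ≠ ⊤) : MemLp f 2 μ := by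
  refine ⟨hmeas, ?_⟩
  rw [eLpNorm_eq_lintegral_rpow_enorm_toReal two_ne_zero ENNReal.ofNat_ne_top]
  simp_rw [enorm_eq_nnnorm]
  have h2 : (2 : ℝ≥0∞).toReal = 2 := by simp
  rw [h2]
  refine ENNReal.rpow_lt_top_of_nonneg (by norm_num) ?_
  have hconv : ∀ ω : Ω, ((‖f ω‖₊ : ℝ≥0∞)) ^ (2:ℝ) = (‖f ω‖₊ : ℝ≥0∞) ^ (2:ℕ) := fun ω => by
    rw [← ENNReal.rpow_natCast]; norm_num
  simp_rw [hconv]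
  exact h

end Aux

/-- Cancellation of the delayed-state terms in the duality computation:
for an adapted process `x` vanishing on `[-δ, 0)` and a process `a` vanishing on
`(T, T+δ]`, the delayed pairing equals the pairing against the conditional
expectation of the shifted process. -/
theorem delayed_duality_cancellation {Ω : Type*} [m0 : MeasurableSpace Ω]
    (μ : Measure Ω) [IsProbabilityMeasure μ]
    (ℱ : ℝ → MeasurableSpace Ω) (hmono : Monotone ℱ) (hle : ∀ t, ℱ t ≤ m0)
    (δ T : ℝ) (hδ : 0 < δ) (hδT : δ < T) (n : ℕ) (hn : 0 < n)
    (a x : ℝ × Ω → EuclideanSpace ℝ (Fin n))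
    (ha : Measurable a) (hx : Measurable x)
    (hadapted : ∀ t : ℝ, StronglyMeasurable[ℱ t] fun ω => x (t, ω))
    (hx0 : ∀ t ∈ Set.Ico (-δ) (0:ℝ), ∀ᵐ ω ∂μ, x (t, ω) = 0)
    (ha0 : ∀ t ∈ Set.Ioc T (T + δ), ∀ᵐ ω ∂μ, a (t, ω) = 0)
    (hai : ∫⁻ t in Set.Icc (0:ℝ) (T + δ), ∫⁻ ω, (‖a (t, ω)‖₊ : ℝ≥0∞) ^ 2 ∂μ < ⊤)
    (hxi : ∫⁻ t in Set.Icc (-δ) T, ∫⁻ ω, (‖x (t, ω)‖₊ : ℝ≥0∞) ^ 2 ∂μ < ⊤) :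
    ∫ t in Set.Icc (0:ℝ) T, ∫ ω, ⟪a (t, ω), x (t - δ, ω)⟫ ∂μ
      = ∫ t in Set.Icc (0:ℝ) T,
          ∫ ω, ⟪(μ[fun ω => a (t + δ, ω) | ℱ t]) ω, x (t, ω)⟫ ∂μ := by
  classical
  have hmp : MeasurePreserving (fun t : ℝ => t + δ) volume volume :=
    measurePreserving_add_right volume δ
  have hemb : MeasurableEmbedding (fun t : ℝ => t + δ) :=
    (Homeomorph.addRight δ).measurableEmbedding
  set F : ℝ → ℝ := fun t => ∫ ω, ⟪a (t, ω), x (t - δ, ω)⟫ ∂μ with hF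
  set G : ℝ → ℝ := fun t => ∫ ω, ⟪(μ[fun ω => a (t + δ, ω) | ℱ t]) ω, x (t, ω)⟫ ∂μ with hG
  have hpre : (fun t : ℝ => t + δ) ⁻¹' Set.Icc 0 T = Set.Icc (-δ) (T - δ) := by
    ext t
    simp only [Set.mem_preimage, Set.mem_Icc]
    constructor <;> rintro ⟨h1, h2⟩ <;> constructor <;> linarith
  have step1 : ∫ t in Set.Icc (0:ℝ) T, F t = ∫ t in Set.Icc (-δ) (T - δ), F (t + δ) := by
    rw [← hmp.setIntegral_preimage_emb hemb F (Set.Icc 0 T), hpre]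
  have hFz : ∀ t ∈ Set.Icc (-δ) (T - δ) \ Set.Icc 0 (T - δ), F (t + δ) = 0 := by
    rintro t ⟨⟨h1, h2⟩, h3⟩
    have ht0 : t < 0 := by
      by_contra h
      exact h3 ⟨le_of_not_gt h, h2⟩
    have hzero : (fun ω => ⟪a (t + δ, ω), x (t + δ - δ, ω)⟫) =ᵐ[μ] (fun _ => (0:ℝ)) := by
      filter_upwards [hx0 t ⟨h1, ht0⟩] with ω hω
      have hts : t + δ - δ = t := by ring
      rw [hts, hω, inner_zero_right]
    simp only [hF]
    rw [integral_congr_ae hzero, integral_zero]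
  have step2 : ∫ t in Set.Icc (-δ) (T - δ), F (t + δ)
      = ∫ t in Set.Icc (0:ℝ) (T - δ), F (t + δ) :=
    setIntegral_eq_of_subset_of_forall_diff_eq_zero measurableSet_Icc
      (Set.Icc_subset_Icc (by linarith) le_rfl) hFz
  have hGz : ∀ t ∈ Set.Icc (0:ℝ) T \ Set.Icc (0:ℝ) (T - δ), G t = 0 := by
    rintro t ⟨⟨h1, h2⟩, h3⟩
    have ht : T - δ < t := by
      by_contra h
      exact h3 ⟨h1, le_of_not_gt h⟩
    have hc : μ[fun ω => a (t + δ, ω)|ℱ t] =ᵐ[μ] (fun _ => 0) := by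
      have h0 : μ[(fun _ : Ω => (0 : EuclideanSpace ℝ (Fin n)))|ℱ t] = 0 := condExp_zero
      have := condExp_congr_ae (m := ℱ t) (μ := μ)
        (g := fun _ : Ω => (0 : EuclideanSpace ℝ (Fin n)))
        (ha0 (t + δ) ⟨by linarith, by linarith⟩)
      rw [h0] at this
      exact this
    have hzero : (fun ω => ⟪(μ[fun ω => a (t + δ, ω)|ℱ t]) ω, x (t, ω)⟫)
        =ᵐ[μ] (fun _ => (0:ℝ)) := by
      filter_upwards [hc] with ω hω
      rw [hω, inner_zero_left]
    simp only [hG]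
    rw [integral_congr_ae hzero, integral_zero]
  have step2' : ∫ t in Set.Icc (0:ℝ) T, G t = ∫ t in Set.Icc (0:ℝ) (T - δ), G t :=
    setIntegral_eq_of_subset_of_forall_diff_eq_zero measurableSet_Icc
      (Set.Icc_subset_Icc le_rfl (by linarith)) hGz
  -- measurability of the inner lintegrals
  have hφm : Measurable fun t : ℝ => ∫⁻ ω, (‖a (t, ω)‖₊ : ℝ≥0∞) ^ 2 ∂μ :=
    Measurable.lintegral_prod_right' ((ha.nnnorm.coe_nnreal_ennreal).pow_const 2)
  have hψm : Measurable fun t : ℝ => ∫⁻ ω, (‖x (t, ω)‖₊ : ℝ≥0∞) ^ 2 ∂μ :=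
    Measurable.lintegral_prod_right' ((hx.nnnorm.coe_nnreal_ennreal).pow_const 2)
  -- a.e. finiteness for the shifted process a
  have haN : volume ({t : ℝ | (∫⁻ ω, (‖a (t, ω)‖₊ : ℝ≥0∞) ^ 2 ∂μ) = ⊤}
      ∩ Set.Icc 0 (T + δ)) = 0 := by
    have h1 : ∀ᵐ t ∂(volume.restrict (Set.Icc (0:ℝ) (T + δ))),
        (∫⁻ ω, (‖a (t, ω)‖₊ : ℝ≥0∞) ^ 2 ∂μ) < ⊤ := ae_lt_top hφm hai.ne
    have h2 := (ae_restrict_iff' measurableSet_Icc).mp h1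
    refine measure_mono_null ?_ (ae_iff.mp h2)
    rintro t ⟨htφ, ht⟩
    exact fun h => (h ht).ne htφ
  have haN' : volume ((fun t : ℝ => t + δ) ⁻¹'
      ({t : ℝ | (∫⁻ ω, (‖a (t, ω)‖₊ : ℝ≥0∞) ^ 2 ∂μ) = ⊤} ∩ Set.Icc 0 (T + δ))) = 0 := by
    have hms : MeasurableSet ({t : ℝ | (∫⁻ ω, (‖a (t, ω)‖₊ : ℝ≥0∞) ^ 2 ∂μ) = ⊤}
        ∩ Set.Icc 0 (T + δ)) :=
      (hφm (measurableSet_singleton ⊤)).inter measurableSet_Icc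
    rw [hmp.measure_preimage hms.nullMeasurableSet]
    exact haN
  have ha_ae : ∀ᵐ t ∂volume, t ∈ Set.Icc (0:ℝ) (T - δ) →
      (∫⁻ ω, (‖a (t + δ, ω)‖₊ : ℝ≥0∞) ^ 2 ∂μ) ≠ ⊤ := by
    rw [ae_iff]
    refine measure_mono_null ?_ haN'
    intro t ht
    simp only [Set.mem_setOf_eq] at ht
    push_neg at ht
    obtain ⟨⟨ht1, ht2⟩, ht3⟩ := ht
    exact ⟨ht3, ⟨by dsimp only; linarith, by dsimp only; linarith⟩⟩
  -- a.e. finiteness for x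
  have hx_ae : ∀ᵐ t ∂volume, t ∈ Set.Icc (0:ℝ) (T - δ) →
      (∫⁻ ω, (‖x (t, ω)‖₊ : ℝ≥0∞) ^ 2 ∂μ) ≠ ⊤ := by
    have h1 : ∀ᵐ t ∂(volume.restrict (Set.Icc (-δ) T)),
        (∫⁻ ω, (‖x (t, ω)‖₊ : ℝ≥0∞) ^ 2 ∂μ) < ⊤ := ae_lt_top hψm hxi.ne
    have h2 := (ae_restrict_iff' measurableSet_Icc).mp h1
    filter_upwards [h2] with t h ht
    exact (h ⟨by linarith [ht.1], by linarith [ht.2]⟩).ne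
  have key : ∀ᵐ t ∂volume, t ∈ Set.Icc (0:ℝ) (T - δ) → F (t + δ) = G t := by
    filter_upwards [ha_ae, hx_ae] with t h1 h2 ht
    have hma : MemLp (fun ω => a (t + δ, ω)) 2 μ :=
      memℒp_two_of_lintegral_aux ((ha.comp measurable_prodMk_left).aestronglyMeasurable) (h1 ht)
    have hmx : MemLp (fun ω => x (t, ω)) 2 μ :=
      memℒp_two_of_lintegral_aux ((hx.comp measurable_prodMk_left).aestronglyMeasurable) (h2 ht)
    have hkey := integral_inner_condexp_aux (hle t) hma hmx (hadapted t)
    simp only [hF, hG]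
    rw [show t + δ - δ = t from by ring]
    exact hkey
  have step3 : ∫ t in Set.Icc (0:ℝ) (T - δ), F (t + δ)
      = ∫ t in Set.Icc (0:ℝ) (T - δ), G t :=
    setIntegral_congr_ae measurableSet_Icc key
  calc ∫ t in Set.Icc (0:ℝ) T, F t
      = ∫ t in Set.Icc (-δ) (T - δ), F (t + δ) := step1
    _ = ∫ t in Set.Icc (0:ℝ) (T - δ), F (t + δ) := step2
    _ = ∫ t in Set.Icc (0:ℝ) (T - δ), G t := step3
    _ = ∫ t in Set.Icc (0:ℝ) T, G t := step2'.symm
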